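/- Every finite M-group is solvable, where a finite group G is an M-group if every irreducible complex character χ of G is monomial, i.e., χ = λ^G for some subgroup H ≤ G and some linear character λ of H. -/

import Mathlib

open scoped Classical

/-- `χ` is the character of some irreducible finite-dimensional complex representation
of the group `G`. -/
def IsIrredChar (G : Type) [Monoid G] (χ : G → ℂ) : Prop :=
  ∃ V : FDRep ℂ G, CategoryTheory.Simple V ∧ χ = FDRep.character V

/-- `lam` is a linear character: a multiplicative function into `ℂˣ`, i.e. a degree-one
character. -/
def IsLinearChar {H : Type*} [Group H] (lam : H → ℂ) : Prop :=
  lam 1 = 1 ∧ ∀ a b : H, lam (a * b) = lam a * lam b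

/-- The class function on `G` induced from a function `φ` on a subgroup `H`:
`φ^G g = (1/|H|) ∑_{x ∈ G, x g x⁻¹ ∈ H} φ (x g x⁻¹)`. -/
noncomputable def indClassFun {G : Type*} [Group G] [Fintype G]
    (H : Subgroup G) (φ : ↥H → ℂ) : G → ℂ :=
  fun g => (Nat.card ↥H : ℂ)⁻¹ *
    ∑ x : G, if h : x * g * x⁻¹ ∈ H then φ ⟨x * g * x⁻¹, h⟩ else 0

open Module LinearMap

section TraceAdd
variable {k : Type} [Field k] {V : Type} [AddCommGroup V] [Module k V] [FiniteDimensional k V]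

theorem trace_restrict_add_trace_mapQ (p : Submodule k V)
    (f : V →ₗ[k] V) (hf : ∀ x ∈ p, f x ∈ p) :
    trace k p (f.restrict hf) +
      trace k (V ⧸ p) (Submodule.mapQ p p f (fun x hx => hf x hx)) = trace k V f := by
  obtain ⟨q, hq⟩ := Submodule.exists_isCompl p
  set r : V →ₗ[k] p := Submodule.projectionOnto p q hq with hr
  set t : V →ₗ[k] q := Submodule.projectionOnto q p hq.symm with ht
  set e : (V ⧸ p) ≃ₗ[k] q := Submodule.quotientEquivOfIsCompl p q hq with he
  have hid : p.subtype ∘ₗ r + q.subtype ∘ₗ t = LinearMap.id := by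
    ext x
    exact Submodule.projection_add_projection_eq_self hq x
  have h1 : trace k V f = trace k V (f ∘ₗ (p.subtype ∘ₗ r)) + trace k V (f ∘ₗ (q.subtype ∘ₗ t)) := by
    rw [← map_add, ← comp_add, hid, comp_id]
  have hemk : ∀ y : V, e (Submodule.Quotient.mk y) = t y := by
    intro y
    have hy : (↑(r y) : V) + ↑(t y) = y := Submodule.projection_add_projection_eq_self hq y
    have hsub : y - ↑(t y) ∈ p := by
      have : y - ↑(t y) = ↑(r y) := sub_eq_iff_eq_add.mpr hy.symm
      rw [this]; exact (r y).2
    have h1 : (Submodule.Quotient.mk y : V ⧸ p) = Submodule.Quotient.mk (↑(t y) : V) :=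
      (Submodule.Quotient.eq p).mpr hsub
    rw [h1]
    exact Submodule.quotientEquivOfIsCompl_apply_mk_coe hq (t y)
  have h2 : trace k V (f ∘ₗ (p.subtype ∘ₗ r)) = trace k p (f.restrict hf) := by
    have hassoc : f ∘ₗ (p.subtype ∘ₗ r) = (f ∘ₗ p.subtype) ∘ₗ r := by rw [comp_assoc]
    rw [hassoc, trace_comp_comm']
    congr 1
    ext x
    have hh : (r ∘ₗ (f ∘ₗ p.subtype)) x = r ((f x : V)) := rfl
    rw [hh]
    have hfx : (f x : V) = ((⟨f x, hf x x.2⟩ : p) : V) := rfl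
    rw [hfx, Submodule.projectionOnto_apply_left hq]
    rfl
  have h3 : trace k V (f ∘ₗ (q.subtype ∘ₗ t)) =
      trace k (V ⧸ p) (Submodule.mapQ p p f (fun x hx => hf x hx)) := by
    have hassoc : f ∘ₗ (q.subtype ∘ₗ t) = (f ∘ₗ q.subtype) ∘ₗ t := by rw [comp_assoc]
    rw [hassoc, trace_comp_comm']
    have hconj : t ∘ₗ (f ∘ₗ q.subtype) = e.conj (Submodule.mapQ p p f (fun x hx => hf x hx)) := by
      ext x
      simp only [LinearEquiv.conj_apply, comp_apply, coe_comp, Function.comp_apply,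
        Submodule.coe_subtype]
      have h4 : e.symm x = (Submodule.Quotient.mk (x : V) : V ⧸ p) := rfl
      erw [h4, Submodule.mapQ_apply, hemk]
    rw [hconj, trace_conj']
  rw [h1, h2, h3]
end TraceAdd

open Module LinearMap CategoryTheory

section SubQuot
variable {k G : Type} [Field k] [Monoid G]

/-- The subrepresentation on an invariant submodule. -/
noncomputable def subRep (V : FDRep k G) (p : Submodule k V) (hp : ∀ (g : G), ∀ x ∈ p, V.ρ g x ∈ p) :
    Representation k G p where
  toFun g := (V.ρ g).restrict (hp g)
  map_one' := by ext x; simp [LinearMap.restrict_apply]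
  map_mul' g h := by ext x; simp [LinearMap.restrict_apply]

/-- The quotient representation on the quotient by an invariant submodule. -/
noncomputable def quotRep (V : FDRep k G) (p : Submodule k V) (hp : ∀ (g : G), ∀ x ∈ p, V.ρ g x ∈ p) :
    Representation k G (V ⧸ p) where
  toFun g := Submodule.mapQ p p (V.ρ g) (fun x hx => hp g x hx)
  map_one' := by
    apply Submodule.linearMap_qext; ext x; simp
  map_mul' g h := by
    apply Submodule.linearMap_qext; ext x; simp

end SubQuot
section SubQuot2
variable {k G : Type} [Field k] [Monoid G]

theorem char_subRep_add_char_quotRep (V : FDRep k G) (p : Submodule k V)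
    (hp : ∀ (g : G), ∀ x ∈ p, V.ρ g x ∈ p) (g : G) :
    (FDRep.of (subRep V p hp)).character g + (FDRep.of (quotRep V p hp)).character g
      = V.character g :=
  trace_restrict_add_trace_mapQ (k := k) (V := V) p (V.ρ g) (hp g)

end SubQuot2
section SimpleCons
variable {k G : Type} [Field k] [Monoid G]

theorem simple_of_no_invariant_submodule (X : FDRep k G) (h0 : Module.finrank k X ≠ 0)
    (h : ∀ p : Submodule k X, (∀ (g : G), ∀ x ∈ p, X.ρ g x ∈ p) → p = ⊥ ∨ p = ⊤) :
    CategoryTheory.Simple X := by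
  constructor
  intro Y f hm
  constructor
  · intro hiso hf0
    apply h0
    subst hf0
    have hid : 𝟙 X = (0 : X ⟶ X) := by
      rw [← CategoryTheory.IsIso.inv_hom_id (0 : Y ⟶ X), CategoryTheory.Limits.comp_zero]
    have hzero : ∀ x : X, x = 0 := by
      intro x
      have h1 : (𝟙 X : X ⟶ X).hom x = x := rfl
      rw [hid] at h1
      have h2 : ((0 : X ⟶ X)).hom x = 0 := rfl
      rw [← h1, h2]
    have : Subsingleton X := ⟨fun a b => by rw [hzero a, hzero b]⟩
    exact Module.finrank_zero_iff.mpr this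
  · intro hf
    -- f.hom is injective
    set flin : (Y : Type) →ₗ[k] (X : Type) := f.hom.hom.hom with hflin
    have hcomm : ∀ (g : G) (y : Y), flin (Y.ρ g y) = X.ρ g (flin y) := fun g y =>
      congrFun (congrArg (fun (φ : Y.V ⟶ X.V) => (φ : Y → X)) (f.comm g)) y
    have hK : ∀ (g : G), ∀ x ∈ LinearMap.ker flin, Y.ρ g x ∈ LinearMap.ker flin := by
      intro g x hx
      simp only [LinearMap.mem_ker] at hx ⊢
      rw [hcomm, hx, map_zero]
    set Z : FDRep k G := FDRep.of (subRep Y (LinearMap.ker flin) hK) with hZ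
    have hιcomm : ∀ g : G, ∀ x : Z, ((LinearMap.ker flin).subtype) (Z.ρ g x)
        = Y.ρ g (((LinearMap.ker flin).subtype) x) := fun g x => rfl
    set ι : Z ⟶ Y := ⟨FGModuleCat.ofHom ((LinearMap.ker flin).subtype :
        (Z : Type) →ₗ[k] (Y : Type)), fun g => by ext x; exact hιcomm g x⟩ with hι
    have hιf : ι ≫ f = 0 := by
      ext x
      exact x.2
    have hι0 : ι = 0 := by
      have := hm.right_cancellation (f := f) ι 0 (by simpa using hιf)
      exact this
    have hinj : Function.Injective flin := by
      rw [← LinearMap.ker_eq_bot]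
      rw [eq_bot_iff]
      intro y hy
      have : (⟨y, hy⟩ : LinearMap.ker flin) = Z.ρ 1 ⟨y, hy⟩ := by rw [map_one]; rfl
      have h2 : ι.hom ⟨y, hy⟩ = y := rfl
      rw [hι0] at h2
      have h3 : ((0 : Z ⟶ Y)).hom ⟨y, hy⟩ = 0 := rfl
      rw [h3] at h2
      simp [← h2]
    have hR : ∀ (g : G), ∀ x ∈ LinearMap.range flin, X.ρ g x ∈ LinearMap.range flin := by
      rintro g x ⟨y, rfl⟩
      exact ⟨Y.ρ g y, hcomm g y⟩
    have hsurj : Function.Surjective flin := by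
      rcases h (LinearMap.range flin) hR with hbot | htop
      · exfalso
        apply hf
        ext y
        have : flin y ∈ LinearMap.range flin := ⟨y, rfl⟩
        rw [hbot] at this
        simpa using this
      · rw [← LinearMap.range_eq_top]
        exact htop
    set e : (Y : Type) ≃ₗ[k] (X : Type) := LinearEquiv.ofBijective flin ⟨hinj, hsurj⟩ with he
    have hg : ∀ (g : G) (x : X), e.symm (X.ρ g x) = Y.ρ g (e.symm x) := by
      intro g x
      apply hinj
      have h1 : flin (e.symm (X.ρ g x)) = X.ρ g x := e.apply_symm_apply _
      have h2 : flin (e.symm x) = x := e.apply_symm_apply _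
      rw [show flin (Y.ρ g (e.symm x)) = X.ρ g (flin (e.symm x)) from hcomm g _, h1, h2]
    set ginv : X ⟶ Y := ⟨FGModuleCat.ofHom (e.symm.toLinearMap : (X : Type) →ₗ[k] (Y : Type)),
      fun g => by ext x; exact hg g x⟩ with hginv
    refine ⟨⟨ginv, ?_, ?_⟩⟩
    · ext y
      exact e.symm_apply_apply y
    · ext x
      exact e.apply_symm_apply x

end SimpleCons
section Decomp
variable {k G : Type} [Field k] [Monoid G]

theorem exists_simple_decomp (W : FDRep k G) :
    ∃ L : List (FDRep k G), (∀ M ∈ L, CategoryTheory.Simple M) ∧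
      (∀ g : G, W.character g = (L.map (fun M => M.character g)).sum) ∧
      (L.map (fun M : FDRep k G => Module.finrank k (M : Type))).sum = Module.finrank k W := by
  suffices h : ∀ (n : ℕ) (W : FDRep k G), Module.finrank k W = n →
      ∃ L : List (FDRep k G), (∀ M ∈ L, CategoryTheory.Simple M) ∧
      (∀ g : G, W.character g = (L.map (fun M => M.character g)).sum) ∧
      (L.map (fun M : FDRep k G => Module.finrank k (M : Type))).sum = Module.finrank k W by
    exact h _ W rfl
  intro n
  induction n using Nat.strong_induction_on with
  | _ n ih =>
    intro W hn
    by_cases h0 : Module.finrank k W = 0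
    · refine ⟨[], by simp, fun g => ?_, by simp [h0]⟩
      have hss : Subsingleton W := Module.finrank_zero_iff.mp h0
      have hz : W.ρ g = 0 := Subsingleton.elim _ _
      simp [FDRep.character, hz]
    · by_cases hs : ∀ p : Submodule k W, (∀ g : G, ∀ x ∈ p, W.ρ g x ∈ p) → p = ⊥ ∨ p = ⊤
      · exact ⟨[W], by simpa using simple_of_no_invariant_submodule W h0 hs, by simp, by simp⟩
      · push_neg at hs
        obtain ⟨p, hpinv, hpbot, hptop⟩ := hs
        have hranks : Module.finrank k (W ⧸ p) + Module.finrank k p = Module.finrank k W :=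
          Submodule.finrank_quotient_add_finrank p
        have hppos : 0 < Module.finrank k p := by
          rcases Nat.eq_zero_or_pos (Module.finrank k p) with hz | hpos
          · exact absurd (Submodule.finrank_eq_zero.mp hz) hpbot
          · exact hpos
        have hlt1 : Module.finrank k p < n := by
          rw [← hn]; exact Submodule.finrank_lt hptop
        have hlt2 : Module.finrank k (W ⧸ p) < n := by omega
        obtain ⟨L1, hL1s, hL1c, hL1f⟩ := ih _ hlt1 (FDRep.of (subRep W p hpinv)) rfl
        obtain ⟨L2, hL2s, hL2c, hL2f⟩ := ih _ hlt2 (FDRep.of (quotRep W p hpinv)) rfl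
        refine ⟨L1 ++ L2, ?_, ?_, ?_⟩
        · intro M hM
          rcases List.mem_append.mp hM with h' | h'
          exacts [hL1s M h', hL2s M h']
        · intro g
          rw [List.map_append, List.sum_append, ← hL1c g, ← hL2c g]
          exact (char_subRep_add_char_quotRep W p hpinv g).symm
        · have e1 : Module.finrank k ((FDRep.of (subRep W p hpinv)) : Type)
              = Module.finrank k p := rfl
          have e2 : Module.finrank k ((FDRep.of (quotRep W p hpinv)) : Type)
              = Module.finrank k (W ⧸ p) := rfl
          rw [List.map_append, List.sum_append, hL1f, hL2f, e1, e2]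
          omega
end Decomp
section Perm
open scoped Classical
variable (k : Type) [Field k] {G : Type} [Group G] (X : Type) [Fintype X] [MulAction G X]

/-- The permutation representation on functions `X → k`. -/
noncomputable def permRep : Representation k G (X → k) where
  toFun g := LinearMap.funLeft k k (fun x => g⁻¹ • x)
  map_one' := by
    ext f x
    simp [LinearMap.funLeft]
  map_mul' g h := by
    ext f x
    simp [LinearMap.funLeft, mul_smul]

theorem permRep_char (g : G) :
    (FDRep.of (permRep k X)).character g = ∑ x : X, if g • x = x then (1 : k) else 0 := by
  classical
  have : (FDRep.of (permRep k X)).character g = LinearMap.trace k (X → k) (permRep k X g) := rfl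
  rw [this, LinearMap.trace_eq_matrix_trace k (Pi.basisFun k X), Matrix.trace]
  congr 1
  ext x
  rw [Matrix.diag_apply, LinearMap.toMatrix_apply]
  simp only [Pi.basisFun_repr]
  have h1 : (permRep k X g) ((Pi.basisFun k X) x) x = (Pi.single (M := fun _ : X => k) x (1:k)) (g⁻¹ • x) := by
    simp [permRep, LinearMap.funLeft, Pi.basisFun_apply]
  rw [h1, Pi.single_apply]
  by_cases hx : g • x = x
  · have h2 : g⁻¹ • x = x := by
      conv_lhs => rw [← hx]
      exact inv_smul_smul g x
    rw [if_pos h2, if_pos hx]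
  · have h2 : ¬ (g⁻¹ • x = x) := by
      intro hc
      apply hx
      conv_lhs => rw [← hc]
      exact smul_inv_smul g x
    rw [if_neg h2, if_neg hx]

end Perm

section Perm2
open scoped Classical
variable (k : Type) [Field k] [CharZero k] {G : Type} [Group G] (X : Type) [Fintype X] [MulAction G X]

theorem permRep_fixed (g : G)
    (h : (FDRep.of (permRep k X)).character g = (FDRep.of (permRep k X)).character (1:G)) :
    ∀ x : X, g • x = x := by
  rw [permRep_char, permRep_char] at h
  simp only [one_smul, if_true] at h
  rw [Finset.sum_boole, Finset.sum_const, Finset.card_univ, nsmul_eq_mul, mul_one] at h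
  have hcard : (Finset.univ.filter (fun x : X => g • x = x)).card = Fintype.card X := by
    exact_mod_cast h
  have huniv := Finset.eq_univ_of_card _ hcard
  exact fun x => Finset.filter_eq_self.mp huniv x (Finset.mem_univ x)

end Perm2
open scoped Classical

theorem simple_finrank_pos {k G : Type} [Field k] [Monoid G] (V : FDRep k G)
    (h : CategoryTheory.Simple V) : 0 < Module.finrank k V := by
  haveI := h
  rw [Nat.pos_iff_ne_zero]
  intro h0
  have hss : Subsingleton V := Module.finrank_zero_iff.mp h0
  have hid : (𝟙 V : V ⟶ V) = 0 := by
    ext x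
    exact @Subsingleton.elim _ hss _ _
  exact CategoryTheory.id_nonzero V hid

section Key
variable {G : Type} [Group G] [Fintype G]

theorem ind_one_eq_index (H : Subgroup G) (lam : ↥H → ℂ) (hlam : IsLinearChar lam) :
    indClassFun H lam 1 = (H.index : ℂ) := by
  have hterm : ∀ x : G, (if h : x * 1 * x⁻¹ ∈ H then lam ⟨x * 1 * x⁻¹, h⟩ else 0) = 1 := by
    intro x
    have hx1 : x * 1 * x⁻¹ = 1 := by group
    rw [dif_pos (by rw [hx1]; exact one_mem H : x * 1 * x⁻¹ ∈ H)]
    have : (⟨x * 1 * x⁻¹, by rw [hx1]; exact one_mem H⟩ : H) = 1 := by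
      apply Subtype.ext; simpa using hx1
    rw [this]
    exact hlam.1
  rw [indClassFun, Finset.sum_congr rfl (fun x _ => hterm x), Finset.sum_const,
    Finset.card_univ, nsmul_eq_mul, mul_one]
  have hne : (Nat.card ↥H : ℂ) ≠ 0 := by
    simp [Nat.card_pos.ne']
  have hidx : (Fintype.card G : ℂ) = (H.index : ℂ) * (Nat.card ↥H : ℂ) := by
    rw [← Nat.cast_mul, Subgroup.index_mul_card, Nat.card_eq_fintype_card]
  rw [hidx]
  field_simp

theorem taketa_key
    (hM : ∀ χ : G → ℂ, IsIrredChar G χ →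
      ∃ (H : Subgroup G) (lam : ↥H → ℂ), IsLinearChar lam ∧ χ = indClassFun H lam) :
    ∀ d : ℕ, ∀ χ : G → ℂ, IsIrredChar G χ → ∀ n : ℕ, n ≤ d → χ 1 = (n : ℂ) →
      ∀ g ∈ derivedSeries G d, χ g = χ 1 := by
  intro d
  induction d with
  | zero =>
    intro χ hχ n hn h1 g hg
    exfalso
    obtain ⟨V, hV, rfl⟩ := hχ
    have hpos := simple_finrank_pos V hV
    rw [FDRep.char_one] at h1
    have : n = 0 := Nat.le_zero.mp hn
    rw [this, Nat.cast_zero, Nat.cast_eq_zero] at h1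
    omega
  | succ d ih =>
    intro χ hχ n hn h1 g hg
    have hDle : derivedSeries G (d+1) ≤ derivedSeries G d := by
      rw [derivedSeries_succ]
      refine Subgroup.commutator_le.mpr fun a ha b hb => ?_
      rw [commutatorElement_def]
      exact mul_mem (mul_mem (mul_mem ha hb) (inv_mem ha)) (inv_mem hb)
    by_cases hnd : n ≤ d
    · exact ih χ hχ n hnd h1 g (hDle hg)
    have hn1 : n = d + 1 := by omega
    obtain ⟨H, lam, hlam, hind⟩ := hM χ hχ
    have hχ1 : χ 1 = (H.index : ℂ) := by rw [hind]; exact ind_one_eq_index H lam hlam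
    have hnidx : n = H.index := by
      have := h1.symm.trans hχ1
      exact_mod_cast this
    -- Step A : derivedSeries G d ≤ H
    have hGdH : ∀ a ∈ derivedSeries G d, a ∈ H := by
      by_cases hidx1 : H.index = 1
      · intro a _
        rw [Subgroup.index_eq_one.mp hidx1]
        trivial
      · haveI : Fintype (G ⧸ H) := Fintype.ofFinite _
        have hd1 : 1 ≤ d := by
          have : H.index ≠ 0 := Subgroup.index_ne_zero_of_finite
          omega
        have hcardQ : Fintype.card (G ⧸ H) = H.index := by
          rw [← Nat.card_eq_fintype_card]; rfl
        set W : FDRep ℂ G := FDRep.of (permRep (G := G) ℂ (G ⧸ H)) with hW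
        have hone : (fun _ => (1:ℂ) : (G ⧸ H) → ℂ) ≠ 0 := by
          intro hc
          have := congrFun hc (QuotientGroup.mk 1)
          simpa using this
        set p : Submodule ℂ ((G ⧸ H) → ℂ) :=
          Submodule.span ℂ {(fun _ => (1:ℂ) : (G ⧸ H) → ℂ)} with hpdef
        have hp : ∀ (g' : G), ∀ x ∈ p, W.ρ g' x ∈ p := by
          intro g' x hx
          obtain ⟨c, hc⟩ := Submodule.mem_span_singleton.mp hx
          apply Submodule.mem_span_singleton.mpr
          refine ⟨c, ?_⟩
          rw [← hc]
          rfl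
        have hfrp : Module.finrank ℂ p = 1 := finrank_span_singleton hone
        have hfrW : Module.finrank ℂ ((G ⧸ H) → ℂ) = d + 1 := by
          rw [Module.finrank_fintype_fun_eq_card, hcardQ, ← hnidx, hn1]
        have hfrQ : Module.finrank ℂ (((G ⧸ H) → ℂ) ⧸ p) = d := by
          have := Submodule.finrank_quotient_add_finrank p
          rw [hfrW, hfrp] at this
          omega
        obtain ⟨L1, hs1, hc1, hf1⟩ := exists_simple_decomp (FDRep.of (subRep W p hp))
        obtain ⟨L2, hs2, hc2, hf2⟩ := exists_simple_decomp (FDRep.of (quotRep W p hp))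
        have hb1 : ∀ M ∈ L1, Module.finrank ℂ (M : Type) ≤ d := by
          intro M hM'
          have h := List.single_le_sum (l := L1.map (fun M : FDRep ℂ G => Module.finrank ℂ (M : Type)))
            (fun _ _ => Nat.zero_le _) _ (List.mem_map_of_mem hM')
          rw [hf1] at h
          have : Module.finrank ℂ ((FDRep.of (subRep W p hp)) : Type) = 1 := hfrp
          omega
        have hb2 : ∀ M ∈ L2, Module.finrank ℂ (M : Type) ≤ d := by
          intro M hM'
          have h := List.single_le_sum (l := L2.map (fun M : FDRep ℂ G => Module.finrank ℂ (M : Type)))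
            (fun _ _ => Nat.zero_le _) _ (List.mem_map_of_mem hM')
          rw [hf2] at h
          have : Module.finrank ℂ ((FDRep.of (quotRep W p hp)) : Type) = d := hfrQ
          omega
        intro a ha
        -- every constituent takes the same value at a and 1
        have hconst : ∀ (L : List (FDRep ℂ G)), (∀ M ∈ L, CategoryTheory.Simple M) →
            (∀ M ∈ L, Module.finrank ℂ (M : Type) ≤ d) →
            (L.map (fun M => M.character a)).sum = (L.map (fun M => M.character (1:G))).sum := by
          intro L hsL hbL
          congr 1
          apply List.map_congr_left
          intro M hM'
          exact ih M.character ⟨M, hsL M hM', rfl⟩ (Module.finrank ℂ (M : Type))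
            (hbL M hM') (FDRep.char_one M) a ha
        have hWa : W.character a = W.character (1:G) := by
          rw [← char_subRep_add_char_quotRep W p hp a, ← char_subRep_add_char_quotRep W p hp 1,
            hc1 a, hc2 a, hc1 1, hc2 1, hconst L1 hs1 hb1, hconst L2 hs2 hb2]
        -- count fixed points
        have hfixa : ∀ q : G ⧸ H, a • q = q := permRep_fixed ℂ (G ⧸ H) a hWa
        have hq := hfixa (QuotientGroup.mk 1)
        rw [MulAction.Quotient.smul_mk] at hq
        have hmem := QuotientGroup.eq.mp hq
        rw [smul_eq_mul, mul_one] at hmem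
        simpa using (H.inv_mem_iff).mp (by simpa using hmem)
    -- Step B : the kernel subgroup K
    have hprod : ∀ (a b : ↥H), lam (a * b) = lam a * lam b := hlam.2
    have hinv : ∀ (a : ↥H), lam a * lam a⁻¹ = 1 := by
      intro a
      rw [← hprod a a⁻¹, mul_inv_cancel]
      exact hlam.1
    set K : Subgroup G :=
      { carrier := {x : G | ∃ hx : x ∈ H, lam ⟨x, hx⟩ = 1}
        mul_mem' := by
          rintro a b ⟨ha, la⟩ ⟨hb, lb⟩
          refine ⟨mul_mem ha hb, ?_⟩
          have he : (⟨a * b, mul_mem ha hb⟩ : ↥H) = ⟨a, ha⟩ * ⟨b, hb⟩ := rfl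
          rw [he, hprod, la, lb, mul_one]
        one_mem' := by
          refine ⟨one_mem H, ?_⟩
          have he : (⟨(1:G), one_mem H⟩ : ↥H) = 1 := rfl
          rw [he]; exact hlam.1
        inv_mem' := by
          rintro a ⟨ha, la⟩
          refine ⟨inv_mem ha, ?_⟩
          have he : (⟨a⁻¹, inv_mem ha⟩ : ↥H) = (⟨a, ha⟩ : ↥H)⁻¹ := rfl
          have := hinv ⟨a, ha⟩
          rw [la, one_mul] at this
          rw [he, this] } with hK
    have hKH : ∀ x ∈ K, x ∈ H := by
      rintro x ⟨hx, -⟩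
      exact hx
    have hDK : derivedSeries G (d+1) ≤ K := by
      rw [derivedSeries_succ]
      refine Subgroup.commutator_le.mpr fun a ha b hb => ?_
      have haH : a ∈ H := hGdH a ha
      have hbH : b ∈ H := hGdH b hb
      have hmem : a * b * a⁻¹ * b⁻¹ ∈ H :=
        mul_mem (mul_mem (mul_mem haH hbH) (inv_mem haH)) (inv_mem hbH)
      rw [commutatorElement_def]
      refine ⟨hmem, ?_⟩
      have he : (⟨a * b * a⁻¹ * b⁻¹, hmem⟩ : ↥H)
          = ⟨a, haH⟩ * ⟨b, hbH⟩ * (⟨a, haH⟩ : ↥H)⁻¹ * (⟨b, hbH⟩ : ↥H)⁻¹ := rfl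
      rw [he, hprod, hprod, hprod]
      have harr : lam ⟨a, haH⟩ * lam ⟨b, hbH⟩ * lam (⟨a, haH⟩ : ↥H)⁻¹ * lam (⟨b, hbH⟩ : ↥H)⁻¹
          = (lam ⟨a, haH⟩ * lam (⟨a, haH⟩ : ↥H)⁻¹) * (lam ⟨b, hbH⟩ * lam (⟨b, hbH⟩ : ↥H)⁻¹) := by
        ring
      rw [harr, hinv, hinv, mul_one]
    -- Final computation
    have hterm : ∀ x : G, (if h : x * g * x⁻¹ ∈ H then lam ⟨x * g * x⁻¹, h⟩ else 0) = 1 := by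
      intro x
      have hx : x * g * x⁻¹ ∈ K := hDK ((derivedSeries_normal G (d+1)).conj_mem g hg x)
      obtain ⟨hxH, hxv⟩ := hx
      rw [dif_pos hxH]
      exact hxv
    have : χ g = (H.index : ℂ) := by
      rw [hind, indClassFun, Finset.sum_congr rfl (fun x _ => hterm x), Finset.sum_const,
        Finset.card_univ, nsmul_eq_mul, mul_one]
      have hne : (Nat.card ↥H : ℂ) ≠ 0 := by
        simp [Nat.card_pos.ne']
      have hidx : (Fintype.card G : ℂ) = (H.index : ℂ) * (Nat.card ↥H : ℂ) := by
        rw [← Nat.cast_mul, Subgroup.index_mul_card, Nat.card_eq_fintype_card]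
      rw [hidx]
      field_simp
    rw [this, hχ1]
end Key

/-- **Taketa's theorem.** Every finite `M`-group is solvable: if every irreducible complex
character of the finite group `G` is monomial (induced from a linear character of some
subgroup), then `G` is solvable. -/
theorem m_group_is_solvable {G : Type} [Group G] [Fintype G]
    (hM : ∀ χ : G → ℂ, IsIrredChar G χ →
      ∃ (H : Subgroup G) (lam : ↥H → ℂ), IsLinearChar lam ∧ χ = indClassFun H lam) :
    IsSolvable G := by
  refine ⟨⟨Fintype.card G, ?_⟩⟩
  rw [eq_bot_iff]
  intro g hg
  rw [Subgroup.mem_bot]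
  obtain ⟨L, hs, hc, hf⟩ := exists_simple_decomp (FDRep.of (permRep (G := G) ℂ G))
  have hb : ∀ M ∈ L, Module.finrank ℂ (M : Type) ≤ Fintype.card G := by
    intro M hM'
    have h := List.single_le_sum (l := L.map (fun M : FDRep ℂ G => Module.finrank ℂ (M : Type)))
      (fun _ _ => Nat.zero_le _) _ (List.mem_map_of_mem hM')
    rw [hf] at h
    have he : Module.finrank ℂ ((FDRep.of (permRep (G := G) ℂ G)) : Type) = Fintype.card G :=
      Module.finrank_fintype_fun_eq_card ℂ
    omega
  have hchar : ∀ M ∈ L, M.character g = M.character (1:G) := fun M hM' =>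
    taketa_key hM (Fintype.card G) M.character ⟨M, hs M hM', rfl⟩ _ (hb M hM')
      (FDRep.char_one M) g hg
  have hWg : (FDRep.of (permRep (G := G) ℂ G)).character g
      = (FDRep.of (permRep (G := G) ℂ G)).character (1:G) := by
    rw [hc g, hc 1]
    congr 1
    exact List.map_congr_left hchar
  have hone := permRep_fixed ℂ G g hWg (1 : G)
  rw [smul_eq_mul, mul_one] at hone
  exact hone
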